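/- Let q be a 12-dimensional quadratic form over a field k of characteristic ≠ 2 whose Witt class lies in I³k (the cube of the fundamental ideal of the Witt ring). Then the Witt index of q is 0, 2, or 6; in particular it cannot be 1, 3, 4, or 5. -/
import Mathlib

/-- a 12-dimensional quadratic form `q` in `I³k` (k a field of
characteristic ≠ 2) has Witt index 0, 2, or 6.  The ambient quadratic-form
theory is axiomatized: `dim` is the dimension, `wittIndex` the Witt index,
`anisoPart` the anisotropic kernel, `InI3` means the Witt class lies in `I³`,
and `Anisotropic` is anisotropy.  The hypotheses record: the Witt
decomposition, that `I³` passes to the anisotropic part, the Arason–Pfister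
Hauptsatz (anisotropic nonzero forms in `I³` have dimension ≥ 8), and that
10-dimensional forms in `I³` are isotropic. -/
theorem stmt_0 {k : Type*} [Field k] (hk : ringChar k ≠ 2)
    {QF : Type*} (dim wittIndex : QF → ℕ) (anisoPart : QF → QF)
    (InI3 Anisotropic : QF → Prop)
    (hdim : ∀ p, dim (anisoPart p) = dim p - 2 * wittIndex p)
    (hle : ∀ p, 2 * wittIndex p ≤ dim p)
    (hI3 : ∀ p, InI3 p → InI3 (anisoPart p))
    (haniso : ∀ p, Anisotropic (anisoPart p))
    (hAP : ∀ p, Anisotropic p → InI3 p → dim p ≠ 0 → 8 ≤ dim p)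
    (h10 : ∀ p, InI3 p → dim p = 10 → ¬ Anisotropic p)
    (q : QF) (h12 : dim q = 12) (hq : InI3 q) :
    wittIndex q = 0 ∨ wittIndex q = 2 ∨ wittIndex q = 6 := by
  have hw : wittIndex q ≤ 6 := by have := hle q; omega
  have hd := hdim q
  have hi3 := hI3 q hq
  have han := haniso q
  have hap := hAP (anisoPart q) han hi3
  have h10' := h10 (anisoPart q) hi3
  interval_cases h : wittIndex q <;> simp_all <;> omega
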